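/- (Gradient bound for the smooth max-of-norms functional) Let p* = p₁+…+p_K, Γ = (γ₁ᵀ,…,γ_Kᵀ)ᵀ ∈ ℝ^{p*} with γ_j ∈ ℝ^{p_j}, and z_j ≥ √p_j. Define s(Γ) = ∑_{j=1}^K exp(β(‖γ_j‖² − z_j²)/(2z_j)) and h_β(s(Γ)) = β⁻¹ log s(Γ). Then ∑_{q,l=1}^{p*} |∂_q h_β(s(Γ)) · ∂_l h_β(s(Γ))| ≤ max_{1≤j≤K} ‖γ_j‖², where ∂_q denotes the partial derivative with respect to the q-th coordinate of Γ. -/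
import Mathlib


/-- Gradient bound for the smooth max-of-norms functional: with
`s(Γ) = ∑_j exp(β(‖γ_j‖² − z_j²)/(2 z_j))` and the partial derivatives
`∂_q h_β(s(Γ)) = s(Γ)⁻¹ (γ^q / z_{j(q)}) exp(β(‖γ_{j(q)}‖² − z_{j(q)}²)/(2 z_{j(q)}))`,
one has `∑_{q,l} |∂_q h_β(s(Γ)) ∂_l h_β(s(Γ))| ≤ max_j ‖γ_j‖²` whenever
`z_j ≥ √p_j`. -/
theorem smooth_max_gradient_bound
    (K : ℕ) (hK : 0 < K) (p : Fin K → ℕ) (hp : ∀ j, 1 ≤ p j)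
    (β : ℝ) (hβ : 0 < β) (z : Fin K → ℝ)
    (hz : ∀ j, Real.sqrt (p j) ≤ z j)
    (Γ : (j : Fin K) → EuclideanSpace ℝ (Fin (p j))) :
    (∑ q : (j : Fin K) × Fin (p j), ∑ l : (j : Fin K) × Fin (p j),
        |((∑ j, Real.exp (β * (‖Γ j‖ ^ 2 - z j ^ 2) / (2 * z j)))⁻¹ *
            (Γ q.1 q.2 / z q.1) *
            Real.exp (β * (‖Γ q.1‖ ^ 2 - z q.1 ^ 2) / (2 * z q.1))) *
          ((∑ j, Real.exp (β * (‖Γ j‖ ^ 2 - z j ^ 2) / (2 * z j)))⁻¹ *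
            (Γ l.1 l.2 / z l.1) *
            Real.exp (β * (‖Γ l.1‖ ^ 2 - z l.1 ^ 2) / (2 * z l.1)))|) ≤
      Finset.univ.sup'
        (Finset.univ_nonempty_iff.mpr (Fin.pos_iff_nonempty.mp hK))
        (fun j => ‖Γ j‖ ^ 2) := by
  have hne : (Finset.univ : Finset (Fin K)).Nonempty :=
    Finset.univ_nonempty_iff.mpr (Fin.pos_iff_nonempty.mp hK)
  set E : Fin K → ℝ := fun j => Real.exp (β * (‖Γ j‖ ^ 2 - z j ^ 2) / (2 * z j)) with hE
  set S : ℝ := ∑ j, E j with hS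
  have hEpos : ∀ j, 0 < E j := fun j => Real.exp_pos _
  have hSpos : 0 < S := Finset.sum_pos (fun j _ => hEpos j) hne
  have hzpos : ∀ j, 0 < z j := fun j =>
    lt_of_lt_of_le (Real.sqrt_pos.mpr (by exact_mod_cast hp j)) (hz j)
  set M : ℝ := Finset.univ.sup' hne (fun j => ‖Γ j‖ ^ 2) with hM
  have hMnonneg : 0 ≤ M := le_trans (by positivity) (Finset.le_sup' (f := fun j => ‖Γ j‖ ^ 2) (Finset.mem_univ hne.choose))
  have hnorm_le : ∀ j, ‖Γ j‖ ≤ Real.sqrt M := by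
    intro j
    have h1 : ‖Γ j‖ ^ 2 ≤ M := Finset.le_sup' (f := fun j => ‖Γ j‖ ^ 2) (Finset.mem_univ j)
    calc ‖Γ j‖ = Real.sqrt (‖Γ j‖ ^ 2) := by rw [Real.sqrt_sq (norm_nonneg _)]
      _ ≤ Real.sqrt M := Real.sqrt_le_sqrt h1
  -- Cauchy-Schwarz per block
  have hCS : ∀ j, ∑ i, |Γ j i| ≤ Real.sqrt (p j) * ‖Γ j‖ := by
    intro j
    have hsq : (∑ i, |Γ j i|) ^ 2 ≤ (p j) * ∑ i, (Γ j i) ^ 2 := by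
      have := sq_sum_le_card_mul_sum_sq (s := (Finset.univ : Finset (Fin (p j))))
        (f := fun i => |Γ j i|)
      simpa [sq_abs] using this
    have hnormsq : ‖Γ j‖ ^ 2 = ∑ i, (Γ j i) ^ 2 := by
      rw [EuclideanSpace.norm_eq, Real.sq_sqrt (by positivity)]
      simp [sq_abs]
    calc ∑ i, |Γ j i| = Real.sqrt ((∑ i, |Γ j i|) ^ 2) := by
          rw [Real.sqrt_sq (Finset.sum_nonneg fun i _ => abs_nonneg _)]
      _ ≤ Real.sqrt ((p j) * ‖Γ j‖ ^ 2) := by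
          apply Real.sqrt_le_sqrt; rw [hnormsq]; exact hsq
      _ = Real.sqrt (p j) * ‖Γ j‖ := by
          rw [Real.sqrt_mul (by positivity), Real.sqrt_sq (norm_nonneg _)]
  set T : ℝ := ∑ q : (j : Fin K) × Fin (p j), |S⁻¹ * (Γ q.1 q.2 / z q.1) * E q.1| with hT
  have hTnonneg : 0 ≤ T := Finset.sum_nonneg fun q _ => abs_nonneg _
  have hTle : T ≤ Real.sqrt M := by
    have hTeq : T = ∑ j, S⁻¹ * E j / z j * ∑ i, |Γ j i| := by
      rw [hT, ← Finset.univ_sigma_univ, Finset.sum_sigma]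
      refine Finset.sum_congr rfl fun j _ => ?_
      rw [Finset.mul_sum]
      refine Finset.sum_congr rfl fun i _ => ?_
      rw [abs_mul, abs_mul, abs_of_nonneg (inv_nonneg.mpr hSpos.le),
        abs_of_nonneg (hEpos j).le, abs_div, abs_of_nonneg (hzpos j).le]
      ring
    rw [hTeq]
    calc ∑ j, S⁻¹ * E j / z j * ∑ i, |Γ j i|
        ≤ ∑ j, S⁻¹ * E j * Real.sqrt M := by
          refine Finset.sum_le_sum fun j _ => ?_
          have h1 : S⁻¹ * E j / z j * ∑ i, |Γ j i|
              ≤ S⁻¹ * E j / z j * (Real.sqrt (p j) * ‖Γ j‖) := by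
            apply mul_le_mul_of_nonneg_left (hCS j)
              (div_nonneg (mul_nonneg (inv_nonneg.mpr hSpos.le) (hEpos j).le) (hzpos j).le)
          refine h1.trans ?_
          have h2 : Real.sqrt (p j) / z j ≤ 1 :=
            (div_le_one (hzpos j)).mpr (hz j)
          have h3 : ‖Γ j‖ ≤ Real.sqrt M := hnorm_le j
          calc S⁻¹ * E j / z j * (Real.sqrt (p j) * ‖Γ j‖)
              = S⁻¹ * E j * ‖Γ j‖ * (Real.sqrt (p j) / z j) := by ring
            _ ≤ S⁻¹ * E j * ‖Γ j‖ * 1 :=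
                mul_le_mul_of_nonneg_left h2
                  (mul_nonneg (mul_nonneg (inv_nonneg.mpr hSpos.le) (hEpos j).le)
                    (norm_nonneg _))
            _ = S⁻¹ * E j * ‖Γ j‖ := by ring
            _ ≤ S⁻¹ * E j * Real.sqrt M :=
                mul_le_mul_of_nonneg_left h3
                  (mul_nonneg (inv_nonneg.mpr hSpos.le) (hEpos j).le)
      _ = Real.sqrt M := by
          rw [← Finset.sum_mul, ← Finset.mul_sum, ← hS, inv_mul_cancel₀ hSpos.ne',
            one_mul]
  calc (∑ q : (j : Fin K) × Fin (p j), ∑ l : (j : Fin K) × Fin (p j),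
        |(S⁻¹ * (Γ q.1 q.2 / z q.1) * E q.1) * (S⁻¹ * (Γ l.1 l.2 / z l.1) * E l.1)|)
      = T * T := by
        rw [hT, Finset.sum_mul_sum]
        exact Finset.sum_congr rfl fun q _ => Finset.sum_congr rfl fun l _ => abs_mul _ _
    _ ≤ Real.sqrt M * Real.sqrt M :=
        mul_le_mul hTle hTle hTnonneg (Real.sqrt_nonneg _)
    _ = M := Real.mul_self_sqrt hMnonneg
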